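/- For every natural number n, ∫_{-1}^{1} (x² − 1)ⁿ dx = (−1)ⁿ · 2^{2n+1} · (n!)² / (2n+1)!. -/

import Mathlib

open intervalIntegral

private lemma cont_pow (n : ℕ) : Continuous (fun x : ℝ => (x ^ 2 - 1) ^ n) := by
  fun_prop

private lemma key (n : ℕ) :
    ∫ x in (-1 : ℝ)..1,
      ((2 * n + 3) * (x ^ 2 - 1) ^ (n + 1) + (2 * n + 2) * (x ^ 2 - 1) ^ n) = 0 := by
  have h : ∀ x ∈ Set.uIcc (-1 : ℝ) 1, HasDerivAt (fun x : ℝ => x * (x ^ 2 - 1) ^ (n + 1))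
      ((2 * n + 3) * (x ^ 2 - 1) ^ (n + 1) + (2 * n + 2) * (x ^ 2 - 1) ^ n) x := by
    intro x _
    have h1 : HasDerivAt (fun x : ℝ => x ^ 2 - 1) (2 * x) x := by
      simpa using (hasDerivAt_pow 2 x).sub_const 1
    have h3 : HasDerivAt (fun x : ℝ => x * (x ^ 2 - 1) ^ (n + 1))
        (1 * (x ^ 2 - 1) ^ (n + 1) + x * (↑(n + 1) * (x ^ 2 - 1) ^ (n + 1 - 1) * (2 * x))) x :=
      (hasDerivAt_id x).mul (h1.pow (n + 1))
    convert h3 using 1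
    simp only [id_eq, pow_succ, Nat.add_sub_cancel]
    push_cast
    ring
  have hint : IntervalIntegrable
      (fun x : ℝ => (2 * n + 3) * (x ^ 2 - 1) ^ (n + 1) + (2 * n + 2) * (x ^ 2 - 1) ^ n)
      MeasureTheory.volume (-1 : ℝ) 1 := by
    apply Continuous.intervalIntegrable; fun_prop
  rw [intervalIntegral.integral_eq_sub_of_hasDerivAt h hint]
  norm_num

/-- `∫_{-1}^{1} (x²−1)ⁿ dx = (−1)ⁿ 2^{2n+1} (n!)² / (2n+1)!`. -/
theorem integral_sq_sub_one_pow (n : ℕ) :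
    ∫ x in (-1 : ℝ)..1, (x ^ 2 - 1) ^ n
      = (-1 : ℝ) ^ n * 2 ^ (2 * n + 1) * (n.factorial : ℝ) ^ 2 / ((2 * n + 1).factorial : ℝ) := by
  induction n with
  | zero => norm_num
  | succ n ih =>
    have hk := key n
    have h1 : IntervalIntegrable (fun x : ℝ => (2 * n + 3) * (x ^ 2 - 1) ^ (n + 1))
        MeasureTheory.volume (-1 : ℝ) 1 := by
      apply Continuous.intervalIntegrable; fun_prop
    have h2 : IntervalIntegrable (fun x : ℝ => (2 * n + 2) * (x ^ 2 - 1) ^ n)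
        MeasureTheory.volume (-1 : ℝ) 1 := by
      apply Continuous.intervalIntegrable; fun_prop
    rw [intervalIntegral.integral_add h1 h2, intervalIntegral.integral_const_mul,
      intervalIntegral.integral_const_mul, ih] at hk
    have heq : (∫ x in (-1 : ℝ)..1, (x ^ 2 - 1) ^ (n + 1))
        = -((2 * n + 2) * ((-1 : ℝ) ^ n * 2 ^ (2 * n + 1) * (n.factorial : ℝ) ^ 2
            / ((2 * n + 1).factorial : ℝ))) / (2 * n + 3) := by
      have h3 : (2 * (n : ℝ) + 3) ≠ 0 := by positivity
      field_simp at hk ⊢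
      linarith [hk]
    rw [heq]
    have hfac1 : ((2 * (n + 1) + 1).factorial : ℝ)
        = (2 * n + 3) * (2 * n + 2) * ((2 * n + 1).factorial : ℝ) := by
      have : 2 * (n + 1) + 1 = (2 * n + 1) + 1 + 1 := by ring
      rw [this, Nat.factorial_succ, Nat.factorial_succ]
      push_cast
      ring
    have hfac2 : ((n + 1).factorial : ℝ) = (n + 1) * (n.factorial : ℝ) := by
      rw [Nat.factorial_succ]; push_cast; ring
    have hne1 : ((2 * n + 1).factorial : ℝ) ≠ 0 := by positivity
    have hne2 : (2 * (n : ℝ) + 3) ≠ 0 := by positivity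
    rw [hfac1, hfac2]
    field_simp
    ring
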